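/- Let v : [0, θ₀] → ℝ be C² with (v(θ), v'(θ)) ≠ (0,0) for all θ, and write v(θ) = ρ(θ) cos ψ(θ), v'(θ) = ρ(θ) sin ψ(θ) with ρ > 0 and ψ continuous. Then v satisfies the ODE v'' = −v (8p v² + (6p−8)(v')²)/(4v² + (p−1)(v')²) on (0, θ₀) if and only if ρ and ψ satisfy ρ'/ρ = −cos ψ · sin ψ · F_p(ψ) and ψ' = −1 − cos²ψ · F_p(ψ) on (0, θ₀), where F_p(ψ) = ((8p−4) cos²ψ + (5p−7) sin²ψ)/(4 cos²ψ + (p−1) sin²ψ). -/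

import Mathlib

open Real

noncomputable def Fp (p ψ : ℝ) : ℝ :=
  ((8 * p - 4) * cos ψ ^ 2 + (5 * p - 7) * sin ψ ^ 2) /
    (4 * cos ψ ^ 2 + (p - 1) * sin ψ ^ 2)

theorem stmt_18 (p : ℝ) (hp : 1 < p) (θ₀ : ℝ) (hθ₀ : 0 < θ₀)
    (v ρ ψ : ℝ → ℝ)
    (hv : ContDiff ℝ 2 v) (hρ : Differentiable ℝ ρ) (hψ : Differentiable ℝ ψ)
    (hρpos : ∀ θ ∈ Set.Icc 0 θ₀, 0 < ρ θ)
    (hnondeg : ∀ θ ∈ Set.Icc 0 θ₀, (v θ, deriv v θ) ≠ (0, 0))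
    (hX : ∀ θ ∈ Set.Icc 0 θ₀, v θ = ρ θ * cos (ψ θ))
    (hY : ∀ θ ∈ Set.Icc 0 θ₀, deriv v θ = ρ θ * sin (ψ θ)) :
    (∀ θ ∈ Set.Ioo 0 θ₀,
        deriv (deriv v) θ =
          -v θ * (8 * p * v θ ^ 2 + (6 * p - 8) * deriv v θ ^ 2) /
            (4 * v θ ^ 2 + (p - 1) * deriv v θ ^ 2)) ↔
    (∀ θ ∈ Set.Ioo 0 θ₀,
        deriv ρ θ / ρ θ = -cos (ψ θ) * sin (ψ θ) * Fp p (ψ θ) ∧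
        deriv ψ θ = -1 - cos (ψ θ) ^ 2 * Fp p (ψ θ)) := by
  have key : ∀ θ ∈ Set.Ioo 0 θ₀,
      ((deriv (deriv v) θ =
          -v θ * (8 * p * v θ ^ 2 + (6 * p - 8) * deriv v θ ^ 2) /
            (4 * v θ ^ 2 + (p - 1) * deriv v θ ^ 2)) ↔
        (deriv ρ θ / ρ θ = -cos (ψ θ) * sin (ψ θ) * Fp p (ψ θ) ∧
          deriv ψ θ = -1 - cos (ψ θ) ^ 2 * Fp p (ψ θ))) := by
    intro θ hθ
    have hmemIcc : θ ∈ Set.Icc 0 θ₀ := ⟨le_of_lt hθ.1, le_of_lt hθ.2⟩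
    have hnhds : Set.Icc 0 θ₀ ∈ nhds θ := Icc_mem_nhds hθ.1 hθ.2
    set c := cos (ψ θ) with hc
    set s := sin (ψ θ) with hs
    set R := ρ θ with hR
    set A := deriv ρ θ with hA
    set B := deriv ψ θ with hB
    have hRpos : 0 < R := hρpos θ hmemIcc
    have hRne : R ≠ 0 := ne_of_gt hRpos
    have pyth : s ^ 2 + c ^ 2 = 1 := sin_sq_add_cos_sq (ψ θ)
    have hdenpos : 0 < 4 * c ^ 2 + (p - 1) * s ^ 2 := by
      have h1 : c ^ 2 ≤ 1 := cos_sq_le_one (ψ θ)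
      rcases le_or_gt p 5 with h | h <;>
        nlinarith [sq_nonneg c, sq_nonneg s]
    have hdenne : 4 * c ^ 2 + (p - 1) * s ^ 2 ≠ 0 := ne_of_gt hdenpos
    set Φ := Fp p (ψ θ) with hΦdef
    have hΦ : Φ * (4 * c ^ 2 + (p - 1) * s ^ 2) =
        (8 * p - 4) * c ^ 2 + (5 * p - 7) * s ^ 2 := by
      rw [hΦdef, Fp]
      exact div_mul_cancel₀ _ hdenne
    -- values of v and deriv v at θ
    have hvθ : v θ = R * c := hX θ hmemIcc
    have hv'θ : deriv v θ = R * s := hY θ hmemIcc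
    -- derivative computations
    have hXev : v =ᶠ[nhds θ] fun t => ρ t * cos (ψ t) :=
      Filter.eventually_of_mem hnhds hX
    have hYev : deriv v =ᶠ[nhds θ] fun t => ρ t * sin (ψ t) :=
      Filter.eventually_of_mem hnhds hY
    have hd1 : HasDerivAt (fun t => ρ t * cos (ψ t)) (A * c + R * (-s * B)) θ :=
      (hρ θ).hasDerivAt.mul ((Real.hasDerivAt_cos (ψ θ)).comp θ (hψ θ).hasDerivAt)
    have hd2 : HasDerivAt (fun t => ρ t * sin (ψ t)) (A * s + R * (c * B)) θ :=
      (hρ θ).hasDerivAt.mul ((Real.hasDerivAt_sin (ψ θ)).comp θ (hψ θ).hasDerivAt)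
    have hC : R * s = A * c + R * (-s * B) := by
      rw [← hv'θ, hXev.deriv_eq, hd1.deriv]
    have hD2 : deriv (deriv v) θ = A * s + R * (c * B) := by
      rw [hYev.deriv_eq, hd2.deriv]
    -- rewrite the right-hand side of the ODE
    have hbigne : 4 * (R * c) ^ 2 + (p - 1) * (R * s) ^ 2 ≠ 0 := by
      have : 4 * (R * c) ^ 2 + (p - 1) * (R * s) ^ 2 =
          R ^ 2 * (4 * c ^ 2 + (p - 1) * s ^ 2) := by ring
      rw [this]
      exact mul_ne_zero (pow_ne_zero 2 hRne) hdenne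
    have hRHS : -(R * c) * (8 * p * (R * c) ^ 2 + (6 * p - 8) * (R * s) ^ 2) /
        (4 * (R * c) ^ 2 + (p - 1) * (R * s) ^ 2) = -(R * c) * (Φ + 1) := by
      rw [div_eq_iff hbigne]
      linear_combination R ^ 3 * c * hΦ
    rw [hD2, hvθ, hv'θ, hRHS]
    constructor
    · intro h
      constructor
      · rw [div_eq_iff hRne]
        linear_combination s * h - c * hC - A * pyth
      · have hBeq : R * B = R * (-1 - c ^ 2 * Φ) := by
          linear_combination c * h + s * hC - R * (B + 1) * pyth
        exact mul_left_cancel₀ hRne hBeq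
    · rintro ⟨h1, h2⟩
      have h1' : A = -c * s * Φ * R := (div_eq_iff hRne).mp h1
      linear_combination s * h1' + R * c * h2 - R * c * Φ * pyth
  exact ⟨fun h θ hθ => (key θ hθ).mp (h θ hθ), fun h θ hθ => (key θ hθ).mpr (h θ hθ)⟩
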